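/- If (A, C) with A ∈ ℝ^{2×2}, C ∈ ℝ^{1×2} is observable (the matrix with rows C and C·A is invertible), then there exists L ∈ ℝ^{2×1} such that all eigenvalues of A − L·C have negative real part. -/

import Mathlib

theorem stmt4 (A : Matrix (Fin 2) (Fin 2) ℝ) (C : Matrix (Fin 1) (Fin 2) ℝ)
    (hobs : IsUnit (!![C 0 0, C 0 1; (C * A) 0 0, (C * A) 0 1] : Matrix (Fin 2) (Fin 2) ℝ)) :
    ∃ L : Matrix (Fin 2) (Fin 1) ℝ,
      ∀ μ : ℂ, μ ∈ spectrum ℂ ((A - L * C).map (Complex.ofReal)) → μ.re < 0 := by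
  set a := C 0 0 with ha
  set b := C 0 1 with hb
  set a00 := A 0 0; set a01 := A 0 1; set a10 := A 1 0; set a11 := A 1 1
  have hD : a * (a * a01 + b * a11) - b * (a * a00 + b * a10) ≠ 0 := by
    rw [Matrix.isUnit_iff_isUnit_det, Matrix.det_fin_two_of] at hobs
    have h1 : (C * A) 0 0 = a * a00 + b * a10 := by
      simp [Matrix.mul_apply, Fin.sum_univ_two]
      rfl
    have h2 : (C * A) 0 1 = a * a01 + b * a11 := by
      simp [Matrix.mul_apply, Fin.sum_univ_two]
      rfl
    rw [h1, h2, isUnit_iff_ne_zero] at hobs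
    intro h
    exact hobs (by linarith)
  set D := a * (a * a01 + b * a11) - b * (a * a00 + b * a10) with hDdef
  set t := a00 + a11 with htdef
  set d := a00 * a11 - a01 * a10 with hddef
  set l1 := ((t + 2) * (b * a00 - a * a01) - b * (d - 1)) / (-D) with hl1
  set l2 := (a * (d - 1) - (t + 2) * (a * a11 - b * a10)) / (-D) with hl2
  refine ⟨!![l1; l2], ?_⟩
  set L : Matrix (Fin 2) (Fin 1) ℝ := !![l1; l2] with hL
  have hE : ∀ i j, (A - L * C) i j = A i j - L i 0 * C 0 j := by
    intro i j
    simp [Matrix.sub_apply, Matrix.mul_apply]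
  have hDne : -D ≠ 0 := neg_ne_zero.mpr hD
  have htr : (A - L * C) 0 0 + (A - L * C) 1 1 = -2 := by
    rw [hE, hE]
    show a00 - l1 * a + (a11 - l2 * b) = -2
    rw [hl1, hl2]
    field_simp
    ring
  have hdet : (A - L * C) 0 0 * (A - L * C) 1 1 - (A - L * C) 0 1 * (A - L * C) 1 0 = 1 := by
    rw [hE, hE, hE, hE]
    show (a00 - l1 * a) * (a11 - l2 * b) - (a01 - l1 * b) * (a10 - l2 * a) = 1
    rw [hl1, hl2]
    field_simp
    ring
  intro μ hμ
  set M := (A - L * C).map (Complex.ofReal) with hM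
  rw [spectrum.mem_iff] at hμ
  rw [Matrix.isUnit_iff_isUnit_det] at hμ
  have hdet0 : (algebraMap ℂ (Matrix (Fin 2) (Fin 2) ℂ) μ - M).det = 0 := by
    by_contra h
    exact hμ (isUnit_iff_ne_zero.mpr h)
  rw [Matrix.det_fin_two] at hdet0
  have e00 : (algebraMap ℂ (Matrix (Fin 2) (Fin 2) ℂ) μ - M) 0 0 = μ - M 0 0 := by
    simp [Matrix.algebraMap_matrix_apply]
  have e11 : (algebraMap ℂ (Matrix (Fin 2) (Fin 2) ℂ) μ - M) 1 1 = μ - M 1 1 := by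
    simp [Matrix.algebraMap_matrix_apply]
  have e01 : (algebraMap ℂ (Matrix (Fin 2) (Fin 2) ℂ) μ - M) 0 1 = -M 0 1 := by
    simp [Matrix.algebraMap_matrix_apply]
  have e10 : (algebraMap ℂ (Matrix (Fin 2) (Fin 2) ℂ) μ - M) 1 0 = -M 1 0 := by
    simp [Matrix.algebraMap_matrix_apply]
  rw [e00, e11, e01, e10] at hdet0
  have hMij : ∀ i j, M i j = ((A - L * C) i j : ℂ) := by intro i j; simp [hM]
  rw [hMij, hMij, hMij, hMij] at hdet0
  have htrC : ((A - L * C) 0 0 : ℂ) + ((A - L * C) 1 1 : ℂ) = -2 := by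
    exact_mod_cast congrArg Complex.ofReal htr
  have hdetC : ((A - L * C) 0 0 : ℂ) * ((A - L * C) 1 1 : ℂ)
      - ((A - L * C) 0 1 : ℂ) * ((A - L * C) 1 0 : ℂ) = 1 := by
    exact_mod_cast congrArg Complex.ofReal hdet
  have hsq : (μ + 1) ^ 2 = 0 := by
    linear_combination hdet0 + μ * htrC - hdetC
  have hμ1 : μ = -1 := by
    have h := pow_eq_zero_iff (n := 2) (by norm_num) |>.mp hsq
    linear_combination h
  rw [hμ1]
  norm_num
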